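/- arXiv:2307.05978 — 3 statements merged into one kernel-verified Lean document; each statement's English description precedes it below -/
import Mathlib

section
/- Let A, B ∈ ℝ^(N×N) with A invertible, M = A⁻¹B, u a right eigenvector of M with eigenvalue k, ũ* a left eigenvector (Mᵀ ũ* = k ũ*), ⟨u, ũ*⟩ ≠ 0, and P the associated spectral complement projector. For any uN ∈ ℝ^N and kN ∉ σ((PMP)|_{(Span{ũ*})^⊥}), with residual R_N = (B − kN A) uN, one has the identity P uN = P (PMP − kN I)⁺ P A⁻¹ R_N and consequently inf_{v ∈ Span{u}} ‖uN − v‖ ≤ ‖P (PMP − kN I)⁺ P A⁻¹‖ · ‖R_N‖. -/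
open Matrix

/-- Operator norm of a matrix, induced by the Euclidean vector norm. -/
noncomputable def opNorm {n : ℕ} (A : Matrix (Fin n) (Fin n) ℝ) : ℝ :=
  ‖(Matrix.toEuclideanCLM (𝕜 := ℝ) A : EuclideanSpace ℝ (Fin n) →L[ℝ] EuclideanSpace ℝ (Fin n))‖

lemma opNorm_bound {n : ℕ} (A : Matrix (Fin n) (Fin n) ℝ) (x : EuclideanSpace ℝ (Fin n)) :
    ‖(WithLp.toLp 2 (A *ᵥ x) : EuclideanSpace ℝ (Fin n))‖ ≤ opNorm A * ‖x‖ := by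
  have h : (WithLp.toLp 2 (A *ᵥ x) : EuclideanSpace ℝ (Fin n)) =
      (Matrix.toEuclideanCLM (𝕜 := ℝ) A) x := by
    rfl
  rw [h]
  exact (Matrix.toEuclideanCLM (𝕜 := ℝ) A).le_opNorm x

/-- P uN = P (PMP − kN I)⁺ P A⁻¹ R_N and
inf_{v ∈ Span{u}} ‖uN − v‖ ≤ ‖P (PMP − kN I)⁺ P A⁻¹‖ ‖R_N‖. -/
theorem stmt6 (n : ℕ) (A B M G : Matrix (Fin n) (Fin n) ℝ) (hA : IsUnit A)
    (hM : M = A⁻¹ * B) (k kN : ℝ)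
    (u ut uN : EuclideanSpace ℝ (Fin n)) (hu : u ≠ 0) (hut : ut ≠ 0)
    (heig : M *ᵥ u = k • u) (heig' : Mᵀ *ᵥ ut = k • ut)
    (hpair : u ⬝ᵥ ut ≠ 0)
    (hsimple : ∀ v : EuclideanSpace ℝ (Fin n), M *ᵥ v = k • v → ∃ c : ℝ, v = c • u)
    (hdec : ∀ v : EuclideanSpace ℝ (Fin n), ∃ (c : ℝ) (w : EuclideanSpace ℝ (Fin n)),
      ut ⬝ᵥ w = 0 ∧ v = c • u + w)
    (P : Matrix (Fin n) (Fin n) ℝ)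
    (hP : P = 1 - (u ⬝ᵥ ut)⁻¹ • vecMulVec u ut)
    (hG1 : ∀ v : Fin n → ℝ, ut ⬝ᵥ v = 0 → G *ᵥ ((P * M * P - kN • 1) *ᵥ v) = v)
    (hG3 : ∀ c : ℝ, G *ᵥ (c • u) = 0)
    (RN : EuclideanSpace ℝ (Fin n)) (hRN : RN = (B - kN • A) *ᵥ uN) :
    P *ᵥ uN = (P * G * P * A⁻¹) *ᵥ RN ∧
    (⨅ c : ℝ, ‖(uN - c • u : EuclideanSpace ℝ (Fin n))‖) ≤
      opNorm (P * G * P * A⁻¹) * ‖RN‖ := by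
  -- function-type copies of the vectors
  set uf : Fin n → ℝ := (u : Fin n → ℝ) with hufdef
  set utf : Fin n → ℝ := (ut : Fin n → ℝ) with hutfdef
  set uNf : Fin n → ℝ := (uN : Fin n → ℝ) with huNfdef
  set RNf : Fin n → ℝ := (RN : Fin n → ℝ) with hRNfdef
  have heigf : M *ᵥ uf = k • uf := heig
  have heigf' : Mᵀ *ᵥ utf = k • utf := heig'
  -- Action of P
  have hvmv : ∀ x : Fin n → ℝ, vecMulVec u ut *ᵥ x = (utf ⬝ᵥ x) • uf := by
    intro x
    ext i
    simp [vecMulVec_apply, mulVec, dotProduct, Finset.mul_sum, mul_comm, mul_left_comm,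
      mul_assoc]
    rfl
  have hPact : ∀ x : Fin n → ℝ, P *ᵥ x = x - ((uf ⬝ᵥ utf)⁻¹ * (utf ⬝ᵥ x)) • uf := by
    intro x
    rw [hP, sub_mulVec, Matrix.smul_mulVec, hvmv, one_mulVec, smul_smul]
  have hPu : P *ᵥ uf = 0 := by
    rw [hPact, dotProduct_comm utf uf, inv_mul_cancel₀ hpair, one_smul, sub_self]
  have hPfix : ∀ x : Fin n → ℝ, utf ⬝ᵥ x = 0 → P *ᵥ x = x := by
    intro x hx
    rw [hPact, hx, mul_zero, zero_smul, sub_zero]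
  -- decompose uN
  obtain ⟨c, w, hw0, hweq⟩ := hdec uN
  set wf : Fin n → ℝ := (w : Fin n → ℝ) with hwfdef
  have hw0f : utf ⬝ᵥ wf = 0 := hw0
  have hweqf : uNf = c • uf + wf := by
    have := congrArg WithLp.ofLp hweq
    simpa [huNfdef, hufdef, hwfdef] using this
  have hMw0 : utf ⬝ᵥ (M *ᵥ wf) = 0 := by
    rw [dotProduct_mulVec, ← mulVec_transpose, dotProduct_comm, heigf', dotProduct_smul,
      dotProduct_comm, hw0f, smul_zero]
  -- P uN = w
  have hPuN : P *ᵥ uNf = wf := by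
    rw [hweqf, mulVec_add, hPfix wf hw0f, Matrix.mulVec_smul, hPu, smul_zero, zero_add]
  -- A⁻¹ RN = (M - kN • 1) uN
  have hAdet : IsUnit A.det := (Matrix.isUnit_iff_isUnit_det A).mp hA
  have hAinv : A⁻¹ *ᵥ RNf = M *ᵥ uNf - kN • uNf := by
    rw [hRN, mulVec_mulVec, Matrix.mul_sub, Matrix.mul_smul,
      Matrix.nonsing_inv_mul A hAdet, ← hM, sub_mulVec, Matrix.smul_mulVec, one_mulVec]
  -- P A⁻¹ RN = M w - kN w
  have hMuN : M *ᵥ uNf - kN • uNf = (c * (k - kN)) • uf + (M *ᵥ wf - kN • wf) := by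
    rw [hweqf, mulVec_add, Matrix.mulVec_smul, heigf]
    module
  have hdot2 : utf ⬝ᵥ (M *ᵥ wf - kN • wf) = 0 := by
    rw [dotProduct_sub, hMw0, dotProduct_smul, hw0f, smul_zero, sub_zero]
  have hPA : P *ᵥ (A⁻¹ *ᵥ RNf) = M *ᵥ wf - kN • wf := by
    rw [hAinv, hMuN, mulVec_add, Matrix.mulVec_smul, hPu, smul_zero, zero_add,
      hPfix _ hdot2]
  -- (P M P - kN 1) w = M w - kN w
  have hkey : (P * M * P - kN • 1) *ᵥ wf = M *ᵥ wf - kN • wf := by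
    rw [sub_mulVec, Matrix.smul_mulVec, one_mulVec, ← mulVec_mulVec, ← mulVec_mulVec,
      hPfix wf hw0f, hPfix _ hMw0]
  -- first part
  have hmain : P *ᵥ uNf = (P * G * P * A⁻¹) *ᵥ RNf := by
    have h2 : (P * G * P * A⁻¹) *ᵥ RNf = P *ᵥ (G *ᵥ (P *ᵥ (A⁻¹ *ᵥ RNf))) := by
      rw [mulVec_mulVec, mulVec_mulVec, mulVec_mulVec]
    rw [h2, hPA, ← hkey, hG1 wf hw0f, hPfix wf hw0f, hPuN]
  refine ⟨hmain, ?_⟩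
  have hwRN : ‖(w : EuclideanSpace ℝ (Fin n))‖ ≤ opNorm (P * G * P * A⁻¹) * ‖RN‖ := by
    have h := opNorm_bound (P * G * P * A⁻¹) RN
    have e : (WithLp.toLp 2 ((P * G * P * A⁻¹) *ᵥ RN) : EuclideanSpace ℝ (Fin n)) = w := by
      show WithLp.toLp 2 ((P * G * P * A⁻¹) *ᵥ RNf) = WithLp.toLp 2 wf
      rw [← hmain, hPuN]
    rwa [e] at h
  have hval : ‖(uN - c • u : EuclideanSpace ℝ (Fin n))‖ = ‖(w : EuclideanSpace ℝ (Fin n))‖ := by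
    congr 1
    rw [hweq]; abel
  calc (⨅ c : ℝ, ‖(uN - c • u : EuclideanSpace ℝ (Fin n))‖)
      ≤ ‖(uN - c • u : EuclideanSpace ℝ (Fin n))‖ :=
        ciInf_le ⟨0, fun x hx => by obtain ⟨c', rfl⟩ := hx; positivity⟩ c
    _ ≤ _ := by rw [hval]; exact hwRN
end

section
/- Symmetric prefactor formula: let A ∈ ℝ^(N×N) be symmetric positive definite, M = A⁻¹ with eigenvalues k = k₁ > k₂ ≥ … ≥ k_N > 0, k simple with unit eigenvector u, P = I − u uᵀ. If k > kN > k₂ then ‖P(PMP − kN I)⁺P (M − kI) P(PMP − kN I)⁺P A⁻¹‖ = k₂(k − k₂)/(kN − k₂)². -/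
open Matrix

lemma vecMulVec_mulVec' {n : ℕ} (u v : Fin n → ℝ) :
    (vecMulVec u u) *ᵥ v = (u ⬝ᵥ v) • u := by
  ext i
  simp only [vecMulVec, mulVec, dotProduct, of_apply, Pi.smul_apply, smul_eq_mul,
    Finset.sum_mul]
  exact Finset.sum_congr rfl fun j _ => by ring

lemma dot_self_one {n : ℕ} (u : EuclideanSpace ℝ (Fin n)) (hu : ‖u‖ = 1) :
    (u : Fin n → ℝ) ⬝ᵥ u = 1 := by
  have := real_inner_self_eq_norm_sq u
  rw [hu, EuclideanSpace.inner_eq_star_dotProduct] at this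
  simpa [EuclideanSpace.inner_eq_star_dotProduct, dotProduct, mul_comm] using this

lemma dot_mulVec_symm {n : ℕ} (M : Matrix (Fin n) (Fin n) ℝ) (hM : M.IsHermitian)
    (u v : Fin n → ℝ) : u ⬝ᵥ (M *ᵥ v) = (M *ᵥ u) ⬝ᵥ v := by
  rw [dotProduct_mulVec, ← mulVec_transpose]
  have : Mᵀ = M := by simpa using hM.eq
  rw [this]

lemma eigAct {n : ℕ} (M G P : Matrix (Fin n) (Fin n) ℝ) (u : EuclideanSpace ℝ (Fin n))
    (k kN μ : ℝ) (hμ : μ ≠ kN)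
    (hP : P = 1 - vecMulVec u u)
    (hG1 : ∀ v : Fin n → ℝ, u ⬝ᵥ v = 0 → G *ᵥ ((P * M * P - kN • 1) *ᵥ v) = v)
    (v : Fin n → ℝ) (hov : (u : Fin n → ℝ) ⬝ᵥ v = 0) (hev : M *ᵥ v = μ • v) :
    (P * G * P * (M - k • 1) * P * G * P * M) *ᵥ v
      = (μ * (μ - k) / (μ - kN) ^ 2) • v := by
  have hPv : P *ᵥ v = v := by
    rw [hP, sub_mulVec, one_mulVec, vecMulVec_mulVec', hov, zero_smul, sub_zero]
  have hPs : ∀ c : ℝ, P *ᵥ (c • v) = c • v := by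
    intro c; rw [mulVec_smul, hPv]
  have hGv : G *ᵥ v = (μ - kN)⁻¹ • v := by
    have h1 : (P * M * P - kN • 1) *ᵥ v = (μ - kN) • v := by
      rw [sub_mulVec, ← mulVec_mulVec, ← mulVec_mulVec, hPv, hev, hPs, smul_mulVec,
        one_mulVec, sub_smul]
    have h2 := hG1 v hov
    rw [h1, mulVec_smul] at h2
    have hne : μ - kN ≠ 0 := sub_ne_zero.mpr hμ
    calc G *ᵥ v = (μ - kN)⁻¹ • ((μ - kN) • (G *ᵥ v)) := by
            rw [smul_smul, inv_mul_cancel₀ hne, one_smul]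
      _ = (μ - kN)⁻¹ • v := by rw [h2]
  have hGs : ∀ c : ℝ, G *ᵥ (c • v) = (c * (μ - kN)⁻¹) • v := by
    intro c; rw [mulVec_smul, hGv, smul_smul]
  have hMk : ∀ c : ℝ, (M - k • 1) *ᵥ (c • v) = (c * (μ - k)) • v := by
    intro c
    rw [mulVec_smul, sub_mulVec, hev, smul_mulVec, one_mulVec, ← sub_smul, smul_smul,
      mul_comm]
  calc (P * G * P * (M - k • 1) * P * G * P * M) *ᵥ v
      = P *ᵥ (G *ᵥ (P *ᵥ ((M - k • 1) *ᵥ (P *ᵥ (G *ᵥ (P *ᵥ (M *ᵥ v))))))) := by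
        simp only [← mulVec_mulVec]
    _ = (μ * (μ - k) / (μ - kN) ^ 2) • v := by
        rw [hev, show μ • v = (μ : ℝ) • v from rfl, hPs, hGs, hPs, hMk, hPs, hGs, hPs]
        congr 1
        field_simp

lemma ineq1 (k k2 kN μ : ℝ) (h1 : 0 < μ) (h2 : μ ≤ k2) (h3 : k2 < kN) (h4 : kN < k) :
    μ * (k - μ) / (kN - μ) ^ 2 ≤ k2 * (k - k2) / (kN - k2) ^ 2 := by
  have d1 : (0:ℝ) < (kN - μ) ^ 2 := pow_pos (by linarith) 2
  have d2 : (0:ℝ) < (kN - k2) ^ 2 := pow_pos (by linarith) 2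
  rw [div_le_div_iff₀ d1 d2]
  have key : k2*(k-k2)*(kN-μ)^2 - μ*(k-μ)*(kN-k2)^2
      = (k2-μ)*((k-k2)*kN^2 - μ*(k2*(k-k2)+(kN-k2)^2)) := by ring
  have ha : (0:ℝ) ≤ k2*(k-k2)+(kN-k2)^2 := by nlinarith
  have h5 : μ*(k2*(k-k2)+(kN-k2)^2) ≤ k2*(k2*(k-k2)+(kN-k2)^2) :=
    mul_le_mul_of_nonneg_right h2 ha
  have hid : (k-k2)*kN^2 - k2*(k2*(k-k2)+(kN-k2)^2) = (kN-k2)*(kN*(k-k2)+k2*(k-kN)) := by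
    ring
  have h6 : (0:ℝ) ≤ (k-k2)*kN^2 - k2*(k2*(k-k2)+(kN-k2)^2) := by
    rw [hid]
    have : (0:ℝ) < kN*(k-k2)+k2*(k-kN) := by
      have := mul_pos (show (0:ℝ) < kN by linarith) (show (0:ℝ) < k-k2 by linarith)
      have := mul_pos (show (0:ℝ) < k2 by linarith) (show (0:ℝ) < k-kN by linarith)
      linarith
    nlinarith
  have h7 : (0:ℝ) ≤ (k2-μ)*((k-k2)*kN^2 - μ*(k2*(k-k2)+(kN-k2)^2)) :=
    mul_nonneg (by linarith) (by linarith)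
  linarith [key ▸ h7]

/-- symmetric prefactor formula:
‖P(PMP − kN I)⁺P (M − kI) P(PMP − kN I)⁺P A⁻¹‖ = k₂(k − k₂)/(kN − k₂)²
for A symmetric positive definite, M = A⁻¹, k its simple largest eigenvalue,
k₂ the second largest, and k > kN > k₂. -/
theorem stmt11 (n : ℕ) (A G : Matrix (Fin n) (Fin n) ℝ) (hA : A.PosDef)
    (k k2 kN : ℝ) (u : EuclideanSpace ℝ (Fin n)) (hu : ‖u‖ = 1)
    (heig : A⁻¹ *ᵥ u = k • u)
    (hsimple : ∀ v : EuclideanSpace ℝ (Fin n), A⁻¹ *ᵥ v = k • v → ∃ c : ℝ, v = c • u)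
    (hk2 : ∃ u2 : EuclideanSpace ℝ (Fin n), u2 ≠ 0 ∧ u ⬝ᵥ u2 = 0 ∧ A⁻¹ *ᵥ u2 = k2 • u2)
    (hmax : ∀ (μ : ℝ) (v : EuclideanSpace ℝ (Fin n)), v ≠ 0 → A⁻¹ *ᵥ v = μ • v → μ = k ∨ μ ≤ k2)
    (hpos : ∀ (μ : ℝ) (v : EuclideanSpace ℝ (Fin n)), v ≠ 0 → A⁻¹ *ᵥ v = μ • v → 0 < μ)
    (hgap1 : k > kN) (hgap2 : kN > k2) (hgap3 : k2 > 0)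
    (P : Matrix (Fin n) (Fin n) ℝ) (hP : P = 1 - vecMulVec u u)
    (hG1 : ∀ v : Fin n → ℝ, u ⬝ᵥ v = 0 → G *ᵥ ((P * A⁻¹ * P - kN • 1) *ᵥ v) = v)
    (hG2 : ∀ v : Fin n → ℝ, u ⬝ᵥ v = 0 → u ⬝ᵥ (G *ᵥ v) = 0)
    (hG3 : ∀ c : ℝ, G *ᵥ (c • u) = 0) :
    opNorm (P * G * P * (A⁻¹ - k • 1) * P * G * P * A⁻¹) = k2 * (k - k2) / (kN - k2) ^ 2 := by
  obtain ⟨u2, hu2ne, hu2o, hu2e⟩ := hk2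
  set B := P * G * P * (A⁻¹ - k • 1) * P * G * P * A⁻¹ with hBdef
  set C := k2 * (k - k2) / (kN - k2) ^ 2 with hCdef
  have hC0 : 0 < C := by
    apply div_pos
    · exact mul_pos hgap3 (by linarith)
    · exact pow_pos (by linarith) 2
  have hMh : (A⁻¹).IsHermitian := hA.isHermitian.inv
  set b := hMh.eigenvectorBasis with hbdef
  set lam := hMh.eigenvalues with hlamdef
  have hbeig : ∀ i, A⁻¹ *ᵥ (b i) = lam i • (b i) := fun i => hMh.mulVec_eigenvectorBasis i
  have hbne : ∀ i, b i ≠ 0 := fun i => by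
    have h1 := b.orthonormal.1 i
    intro h
    rw [h] at h1
    simp at h1
  -- action of B on u
  have hPu : P *ᵥ (u : Fin n → ℝ) = 0 := by
    rw [hP, sub_mulVec, one_mulVec, vecMulVec_mulVec', dot_self_one u hu, one_smul, sub_self]
  have hBu : ∀ c : ℝ, B *ᵥ (c • (u : Fin n → ℝ)) = 0 := by
    intro c
    have : B *ᵥ (c • (u : Fin n → ℝ))
        = P *ᵥ (G *ᵥ (P *ᵥ ((A⁻¹ - k • 1) *ᵥ (P *ᵥ (G *ᵥ (P *ᵥ (A⁻¹ *ᵥ (c • (u : Fin n → ℝ))))))))) := by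
      simp only [hBdef, ← mulVec_mulVec]
    rw [this, mulVec_smul, heig]
    simp only [smul_smul]
    rw [show (c * k) • (u : Fin n → ℝ) = (c * k) • (u : Fin n → ℝ) from rfl, mulVec_smul, hPu]
    simp [mulVec_zero, smul_zero]
  -- eigen action on each basis vector
  classical
  set g : Fin n → ℝ := fun i => if lam i = k then 0
    else lam i * (lam i - k) / (lam i - kN) ^ 2 with hgdef
  have key : ∀ i, B *ᵥ (b i) = g i • (b i) ∧ |g i| ≤ C := by
    intro i
    by_cases hik : lam i = k
    · have hg0 : g i = 0 := by rw [hgdef]; simp [hik]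
      obtain ⟨c, hc⟩ := hsimple (b i) (by rw [hbeig i, hik])
      constructor
      · rw [hg0, zero_smul, hc]
        exact hBu c
      · rw [hg0]; simpa using hC0.le
    · have hle : lam i ≤ k2 := (hmax (lam i) (b i) (hbne i) (hbeig i)).resolve_left hik
      have hpi : 0 < lam i := hpos (lam i) (b i) (hbne i) (hbeig i)
      have ho : (u : Fin n → ℝ) ⬝ᵥ (b i : Fin n → ℝ) = 0 := by
        have h1 := dot_mulVec_symm (A⁻¹) hMh u (b i)
        rw [hbeig i, heig] at h1
        have e1 : (u : Fin n → ℝ) ⬝ᵥ ((lam i • b i : EuclideanSpace ℝ (Fin n)) : Fin n → ℝ)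
            = lam i * ((u : Fin n → ℝ) ⬝ᵥ (b i : Fin n → ℝ)) := by
          simp only [dotProduct, PiLp.smul_apply, smul_eq_mul, Finset.mul_sum]
          exact Finset.sum_congr rfl fun j _ => by ring
        have e2 : ((k • u : EuclideanSpace ℝ (Fin n)) : Fin n → ℝ) ⬝ᵥ (b i : Fin n → ℝ)
            = k * ((u : Fin n → ℝ) ⬝ᵥ (b i : Fin n → ℝ)) := by
          simp only [dotProduct, PiLp.smul_apply, smul_eq_mul, Finset.mul_sum]
          exact Finset.sum_congr rfl fun j _ => by ring
        rw [dotProduct_smul, smul_dotProduct] at h1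
        have h2 : lam i * ((u : Fin n → ℝ) ⬝ᵥ (b i : Fin n → ℝ))
            = k * ((u : Fin n → ℝ) ⬝ᵥ (b i : Fin n → ℝ)) := h1
        by_contra hne
        exact hik (mul_right_cancel₀ hne h2)
      have hμkN : lam i ≠ kN := by intro h; rw [h] at hle; linarith
      have hact := eigAct (A⁻¹) G P u k kN (lam i) hμkN hP hG1 (b i) ho (hbeig i)
      have hgi : g i = lam i * (lam i - k) / (lam i - kN) ^ 2 := by rw [hgdef]; simp [hik]
      refine ⟨by rw [hgi]; exact hact, ?_⟩
      have hneg : lam i * (lam i - k) / (lam i - kN) ^ 2 ≤ 0 := by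
        apply div_nonpos_of_nonpos_of_nonneg
        · apply mul_nonpos_of_nonneg_of_nonpos hpi.le
          linarith
        · exact sq_nonneg _
      rw [hgi, abs_of_nonpos hneg]
      have heq : -(lam i * (lam i - k) / (lam i - kN) ^ 2)
          = lam i * (k - lam i) / (kN - lam i) ^ 2 := by
        rw [show ((lam i : ℝ) - kN) ^ 2 = (kN - lam i) ^ 2 by ring, ← neg_div]
        congr 1
        ring
      rw [heq, hCdef]
      exact ineq1 k k2 kN (lam i) hpi hle hgap2 hgap1
  -- operator-norm facts
  set L := (Matrix.toEuclideanCLM (𝕜 := ℝ) B :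
    EuclideanSpace ℝ (Fin n) →L[ℝ] EuclideanSpace ℝ (Fin n)) with hLdef
  have hL : ∀ y : EuclideanSpace ℝ (Fin n), (L y : Fin n → ℝ) = B *ᵥ (y : Fin n → ℝ) :=
    fun y => Matrix.ofLp_toEuclideanCLM (𝕜 := ℝ) B y
  have hLb : ∀ i, L (b i) = g i • b i := by
    intro i
    apply WithLp.ofLp_injective 2
    rw [hL]
    exact (key i).1
  -- Parseval style norm formula
  have hnorm : ∀ y : EuclideanSpace ℝ (Fin n),
      ‖y‖ = Real.sqrt (∑ i, (b.repr y i) ^ 2) := by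
    intro y
    rw [← LinearIsometryEquiv.norm_map b.repr y, EuclideanSpace.norm_eq]
    congr 1
    exact Finset.sum_congr rfl fun i _ => by rw [Real.norm_eq_abs, sq_abs]
  have hub : opNorm B ≤ C := by
    apply ContinuousLinearMap.opNorm_le_bound _ hC0.le
    intro x
    set c : Fin n → ℝ := fun i => b.repr x i with hcdef
    have hLx : L x = ∑ j, (c j * g j) • b j := by
      conv_lhs => rw [← b.sum_repr x]
      rw [map_sum]
      exact Finset.sum_congr rfl fun j _ => by
        rw [L.map_smul, hLb j, smul_smul]
    have hrep : ∀ j, b.repr (L x) j = c j * g j := by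
      intro j
      rw [OrthonormalBasis.repr_apply_apply, hLx]
      exact b.orthonormal.inner_right_fintype (fun j => c j * g j) j
    have h1 : ‖L x‖ = Real.sqrt (∑ i, (c i * g i) ^ 2) := by
      rw [hnorm (L x)]
      congr 1
      exact Finset.sum_congr rfl fun i _ => by rw [hrep i]
    have h2 : ∑ i, (c i * g i) ^ 2 ≤ C ^ 2 * ∑ i, c i ^ 2 := by
      rw [Finset.mul_sum]
      apply Finset.sum_le_sum
      intro i _
      have hg2 : g i ^ 2 ≤ C ^ 2 := by
        have := pow_le_pow_left₀ (abs_nonneg (g i)) (key i).2 2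
        rwa [sq_abs] at this
      calc (c i * g i) ^ 2 = g i ^ 2 * c i ^ 2 := by ring
        _ ≤ C ^ 2 * c i ^ 2 := mul_le_mul_of_nonneg_right hg2 (sq_nonneg _)
    calc ‖L x‖ = Real.sqrt (∑ i, (c i * g i) ^ 2) := h1
      _ ≤ Real.sqrt (C ^ 2 * ∑ i, c i ^ 2) := Real.sqrt_le_sqrt h2
      _ = C * Real.sqrt (∑ i, c i ^ 2) := by
          rw [Real.sqrt_mul (sq_nonneg C), Real.sqrt_sq hC0.le]
      _ = C * ‖x‖ := by rw [hnorm x]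
  have hlb : C ≤ opNorm B := by
    have hμkN : k2 ≠ kN := by linarith
    have hact := eigAct (A⁻¹) G P u k kN k2 hμkN hP hG1 u2 hu2o hu2e
    have hLu2 : L u2 = (k2 * (k2 - k) / (k2 - kN) ^ 2) • u2 := by
      apply WithLp.ofLp_injective 2
      rw [hL]
      exact hact
    have habs : |k2 * (k2 - k) / (k2 - kN) ^ 2| = C := by
      have hneg : k2 * (k2 - k) / (k2 - kN) ^ 2 ≤ 0 := by
        apply div_nonpos_of_nonpos_of_nonneg
        · exact mul_nonpos_of_nonneg_of_nonpos hgap3.le (by linarith)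
        · exact sq_nonneg _
      rw [abs_of_nonpos hneg, hCdef,
        show ((k2 : ℝ) - kN) ^ 2 = (kN - k2) ^ 2 by ring, ← neg_div]
      congr 1
      ring
    have h2 := L.le_opNorm u2
    rw [hLu2, norm_smul, Real.norm_eq_abs, habs] at h2
    have hu2pos : 0 < ‖u2‖ := norm_pos_iff.mpr hu2ne
    exact le_of_mul_le_mul_right h2 hu2pos
  exact le_antisymm hub hlb
end

section
/- For a symmetric positive definite matrix S with eigenvalues λ_S = λ₁ < λ₂ ≤ … ≤ λ_N, unit eigenvector u_S for λ_S, P_S = I − u_S u_Sᵀ, M₀ = Γ_S(S⁻¹ − k_S I)Γ_S S⁻¹ where Γ_S = P_S(P_S S⁻¹ P_S − k_N I)⁺ P_S, k_S = 1/λ_S, k_{S,i} = 1/λ_i, and k_S ≥ k_N > k_{S,2} > 0: the eigenvalues of M₀ are 0 (on u_S) and (k_{S,i} − k_S)k_{S,i}/(k_{S,i} − k_N)² on u_{S,i} for i ≥ 2, and ‖M₀‖ = k_{S,2}(k_S − k_{S,2})/(k_N − k_{S,2})². -/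
open Matrix

lemma stmt19_vecMulVec_mulVec {n : ℕ} (u v w : Fin n → ℝ) :
    vecMulVec u v *ᵥ w = (v ⬝ᵥ w) • u := by
  ext i; simp [vecMulVec, mulVec, dotProduct, Finset.mul_sum, mul_comm, mul_assoc, mul_left_comm]

lemma stmt19_dot_self {n : ℕ} (u : EuclideanSpace ℝ (Fin n)) (h : ‖u‖ = 1) : u ⬝ᵥ u = 1 := by
  have := real_inner_self_eq_norm_sq u
  rw [EuclideanSpace.inner_eq_star_dotProduct] at this
  simpa [h, dotProduct, eq_comm] using this

lemma stmt19_key_ineq (a b c t : ℝ) (h1 : 0 < t) (h2 : t ≤ c) (h3 : c < b) (h4 : b ≤ a) :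
    t * (a - t) / (b - t) ^ 2 ≤ c * (a - c) / (b - c) ^ 2 := by
  have hbt : 0 < (b - t) ^ 2 := pow_pos (by linarith) 2
  have hbc : 0 < (b - c) ^ 2 := pow_pos (by linarith) 2
  rw [div_le_div_iff₀ hbt hbc]
  nlinarith [mul_nonneg (sub_nonneg.2 h2)
    (add_nonneg (mul_nonneg (mul_nonneg (by linarith : (0:ℝ) ≤ b)
      (by linarith : (0:ℝ) ≤ b - c)) (by linarith : (0:ℝ) ≤ b - t))
      (mul_nonneg (sub_nonneg.2 h4) (by nlinarith : (0:ℝ) ≤ b ^ 2 - c * t)))]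

/-- with M₀ = Γ_S(S⁻¹ − k_S I)Γ_S S⁻¹, Γ_S = P_S(P_S S⁻¹ P_S − k_N I)⁺P_S,
the eigenvalues of M₀ are 0 on u_S and (k_{S,i} − k_S)k_{S,i}/(k_{S,i} − k_N)² on the other
eigenvectors of S⁻¹, and ‖M₀‖ = k_{S,2}(k_S − k_{S,2})/(k_N − k_{S,2})². -/
theorem stmt19 (n : ℕ) (S G : Matrix (Fin n) (Fin n) ℝ) (hS : S.PosDef)
    (kS kS2 kN : ℝ) (uS : EuclideanSpace ℝ (Fin n)) (huS : ‖uS‖ = 1)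
    (heig : S⁻¹ *ᵥ uS = kS • uS)
    (hsimple : ∀ v : EuclideanSpace ℝ (Fin n), S⁻¹ *ᵥ v = kS • v → ∃ c : ℝ, v = c • uS)
    (hk2 : ∃ u2 : EuclideanSpace ℝ (Fin n), ‖u2‖ = 1 ∧ uS ⬝ᵥ u2 = 0 ∧ S⁻¹ *ᵥ u2 = kS2 • u2)
    (hmax : ∀ (μ : ℝ) (v : EuclideanSpace ℝ (Fin n)), v ≠ 0 → S⁻¹ *ᵥ v = μ • v →
      μ = kS ∨ μ ≤ kS2)
    (hpos : ∀ (μ : ℝ) (v : EuclideanSpace ℝ (Fin n)), v ≠ 0 → S⁻¹ *ᵥ v = μ • v → 0 < μ)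
    (hgap1 : kS ≥ kN) (hgap2 : kN > kS2) (hgap3 : kS2 > 0)
    (PS GamS M0 : Matrix (Fin n) (Fin n) ℝ)
    (hPS : PS = 1 - vecMulVec uS uS)
    (hG1 : ∀ v : Fin n → ℝ, uS ⬝ᵥ v = 0 → G *ᵥ ((PS * S⁻¹ * PS - kN • 1) *ᵥ v) = v)
    (hG2 : ∀ v : Fin n → ℝ, uS ⬝ᵥ v = 0 → uS ⬝ᵥ (G *ᵥ v) = 0)
    (hG3 : ∀ c : ℝ, G *ᵥ (c • uS) = 0)
    (hGam : GamS = PS * G * PS)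
    (hM0 : M0 = GamS * (S⁻¹ - kS • 1) * GamS * S⁻¹) :
    M0 *ᵥ uS = 0 ∧
    (∀ (μ : ℝ) (v : EuclideanSpace ℝ (Fin n)), v ≠ 0 → uS ⬝ᵥ v = 0 → S⁻¹ *ᵥ v = μ • v →
      M0 *ᵥ v = ((μ - kS) * μ / (μ - kN) ^ 2) • v) ∧
    opNorm M0 = kS2 * (kS - kS2) / (kN - kS2) ^ 2 := by
  have hdotself : uS ⬝ᵥ uS = 1 := stmt19_dot_self uS huS
  have hPSu : PS *ᵥ (uS : Fin n → ℝ) = 0 := by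
    rw [hPS, sub_mulVec, one_mulVec, stmt19_vecMulVec_mulVec, hdotself]
    simp
  have hPSv : ∀ v : Fin n → ℝ, uS ⬝ᵥ v = 0 → PS *ᵥ v = v := by
    intro v hv
    rw [hPS, sub_mulVec, one_mulVec, stmt19_vecMulVec_mulVec, hv]
    simp
  -- Part 1
  have part1 : M0 *ᵥ (uS : Fin n → ℝ) = 0 := by
    have hGu : GamS *ᵥ (uS : Fin n → ℝ) = 0 := by
      rw [hGam, ← mulVec_mulVec, ← mulVec_mulVec, hPSu, mulVec_zero, mulVec_zero]
    rw [hM0, ← mulVec_mulVec, heig, mulVec_smul, ← mulVec_mulVec, ← mulVec_mulVec, hGu]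
    simp
  -- Part 2
  have part2 : ∀ (μ : ℝ) (v : EuclideanSpace ℝ (Fin n)), v ≠ 0 → uS ⬝ᵥ v = 0 →
      S⁻¹ *ᵥ v = μ • v → M0 *ᵥ v = ((μ - kS) * μ / (μ - kN) ^ 2) • (v : Fin n → ℝ) := by
    intro μ v hv0 hvperp hveig
    have hμkS : μ ≠ kS := by
      intro h
      subst h
      obtain ⟨cc, hc⟩ := hsimple v hveig
      have hc' : (v : Fin n → ℝ) = cc • (uS : Fin n → ℝ) := congrArg WithLp.ofLp hc
      apply hv0
      have hdot : uS ⬝ᵥ (v : Fin n → ℝ) = cc := by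
        rw [hc', dotProduct_smul, hdotself]; simp
      rw [hvperp] at hdot
      apply WithLp.ofLp_injective (p := 2)
      show (v : Fin n → ℝ) = 0
      rw [hc', ← hdot]; simp
    have hμle : μ ≤ kS2 := (hmax μ v hv0 hveig).resolve_left hμkS
    have hμkN : μ - kN ≠ 0 := by
      have : μ < kN := lt_of_le_of_lt hμle hgap2
      linarith
    have hPv : PS *ᵥ (v : Fin n → ℝ) = v := hPSv v hvperp
    have hGv : G *ᵥ (v : Fin n → ℝ) = (μ - kN)⁻¹ • (v : Fin n → ℝ) := by
      have h1 : (PS * S⁻¹ * PS - kN • 1) *ᵥ (v : Fin n → ℝ) = (μ - kN) • (v : Fin n → ℝ) := by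
        rw [sub_mulVec, ← mulVec_mulVec, ← mulVec_mulVec, hPv, hveig, mulVec_smul, hPv,
          smul_mulVec, one_mulVec, sub_smul]
      have h2 := hG1 v hvperp
      rw [h1, mulVec_smul] at h2
      calc G *ᵥ (v : Fin n → ℝ) = (μ - kN)⁻¹ • ((μ - kN) • (G *ᵥ (v : Fin n → ℝ))) := by
            rw [smul_smul, inv_mul_cancel₀ hμkN, one_smul]
        _ = (μ - kN)⁻¹ • (v : Fin n → ℝ) := by rw [h2]
    have hGamv : GamS *ᵥ (v : Fin n → ℝ) = (μ - kN)⁻¹ • (v : Fin n → ℝ) := by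
      rw [hGam, ← mulVec_mulVec, ← mulVec_mulVec, hPv, hGv, mulVec_smul, hPv]
    have hSub : (S⁻¹ - kS • 1) *ᵥ (v : Fin n → ℝ) = (μ - kS) • (v : Fin n → ℝ) := by
      rw [sub_mulVec, hveig, smul_mulVec, one_mulVec, sub_smul]
    show M0 *ᵥ (v : Fin n → ℝ) = ((μ - kS) * μ / (μ - kN) ^ 2) • (v : Fin n → ℝ)
    rw [hM0, ← mulVec_mulVec, hveig, mulVec_smul, ← mulVec_mulVec, ← mulVec_mulVec,
      hGamv, mulVec_smul, hSub, mulVec_smul, mulVec_smul, hGamv]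
    rw [smul_smul, smul_smul, smul_smul]
    congr 1
    field_simp
  refine ⟨part1, part2, ?_⟩
  -- Part 3
  set C : ℝ := kS2 * (kS - kS2) / (kN - kS2) ^ 2 with hCdef
  have hC0 : 0 ≤ C := by
    apply div_nonneg
    · nlinarith
    · positivity
  set T := (Matrix.toEuclideanCLM (𝕜 := ℝ) M0 :
    EuclideanSpace ℝ (Fin n) →L[ℝ] EuclideanSpace ℝ (Fin n)) with hTdef
  have hTapp : ∀ x : EuclideanSpace ℝ (Fin n), (T x : Fin n → ℝ) = M0 *ᵥ (x : Fin n → ℝ) :=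
    fun _ => rfl
  -- lower bound
  obtain ⟨u2, hu2n, hu2perp, hu2eig⟩ := hk2
  have hu2ne : u2 ≠ 0 := by
    intro h; rw [h, norm_zero] at hu2n; norm_num at hu2n
  have hval : (kS2 - kS) * kS2 / (kS2 - kN) ^ 2 = -C := by
    rw [hCdef, show (kS2 - kN) ^ 2 = (kN - kS2) ^ 2 by ring]
    ring
  have hM0u2 : M0 *ᵥ (u2 : Fin n → ℝ) = (-C) • (u2 : Fin n → ℝ) := by
    rw [← hval]; exact part2 kS2 u2 hu2ne hu2perp hu2eig
  have hlow : C ≤ ‖T‖ := by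
    have hTu2 : T u2 = (-C) • u2 := WithLp.ofLp_injective (p := 2) hM0u2
    have h1 : ‖T u2‖ = C := by
      rw [hTu2, norm_smul, hu2n, mul_one, norm_neg, Real.norm_eq_abs, abs_of_nonneg hC0]
    calc C = ‖T u2‖ := h1.symm
      _ ≤ ‖T‖ * ‖u2‖ := T.le_opNorm u2
      _ = ‖T‖ := by rw [hu2n, mul_one]
  -- eigenbasis of S⁻¹
  have hSinv : (S⁻¹).PosDef := hS.inv
  have hHerm : (S⁻¹).IsHermitian := hSinv.isHermitian
  set b := hHerm.eigenvectorBasis with hbdef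
  have hbeig : ∀ i, S⁻¹ *ᵥ (b i : Fin n → ℝ) = hHerm.eigenvalues i • (b i : Fin n → ℝ) :=
    fun i => hHerm.mulVec_eigenvectorBasis i
  have hbne : ∀ i, b i ≠ 0 := fun i => b.orthonormal.ne_zero i
  -- the scaling factors
  have hscale : ∀ i, ∃ c : ℝ, |c| ≤ C ∧ T (b i) = c • b i := by
    intro i
    rcases hmax (hHerm.eigenvalues i) (b i) (hbne i) (hbeig i) with hkSeq | hle
    · obtain ⟨cc, hc⟩ := hsimple (b i) (by rw [hbeig i, hkSeq])
      have hc' : (b i : Fin n → ℝ) = cc • (uS : Fin n → ℝ) := congrArg WithLp.ofLp hc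
      refine ⟨0, by simpa using hC0, ?_⟩
      rw [zero_smul]
      apply WithLp.ofLp_injective (p := 2)
      show M0 *ᵥ (b i : Fin n → ℝ) = 0
      rw [hc', mulVec_smul, part1, smul_zero]
    · set μ := hHerm.eigenvalues i with hμdef
      have hμpos : 0 < μ := hpos μ (b i) (hbne i) (hbeig i)
      have hμlt : μ < kS := lt_of_le_of_lt hle (lt_of_lt_of_le hgap2 hgap1)
      have hperp : uS ⬝ᵥ (b i : Fin n → ℝ) = 0 := by
        have h1 : uS ⬝ᵥ (S⁻¹ *ᵥ (b i : Fin n → ℝ)) = μ * (uS ⬝ᵥ (b i : Fin n → ℝ)) := by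
          rw [hbeig i, dotProduct_smul]; rfl
        have h2 : uS ⬝ᵥ (S⁻¹ *ᵥ (b i : Fin n → ℝ)) = kS * (uS ⬝ᵥ (b i : Fin n → ℝ)) := by
          rw [dotProduct_mulVec, ← mulVec_transpose]
          have hsymm : (S⁻¹)ᵀ = S⁻¹ := by
            have h := hHerm
            rwa [Matrix.IsHermitian, conjTranspose_eq_transpose_of_trivial] at h
          rw [hsymm]
          have heig' : S⁻¹ *ᵥ (uS : Fin n → ℝ) = kS • (uS : Fin n → ℝ) := heig
          rw [heig', smul_dotProduct]
          rfl
        have h3 : (μ - kS) * (uS ⬝ᵥ (b i : Fin n → ℝ)) = 0 := by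
          rw [sub_mul]; rw [h1] at h2; linarith
        rcases mul_eq_zero.mp h3 with h | h
        · exact absurd h (by intro hh; have := sub_eq_zero.mp hh; linarith)
        · exact h
      refine ⟨(μ - kS) * μ / (μ - kN) ^ 2, ?_, ?_⟩
      · rw [abs_le]
        constructor
        · have hk := stmt19_key_ineq kS kN kS2 μ hμpos hle hgap2 hgap1
          have he : (μ - kS) * μ / (μ - kN) ^ 2 = -(μ * (kS - μ) / (kN - μ) ^ 2) := by
            rw [show (μ - kN)^2 = (kN - μ)^2 by ring]
            ring
          rw [he, hCdef]
          exact neg_le_neg hk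
        · apply le_trans _ hC0
          apply div_nonpos_of_nonpos_of_nonneg
          · nlinarith
          · positivity
      · exact WithLp.ofLp_injective (p := 2) (part2 μ (b i) (hbne i) hperp (hbeig i))
  choose c hcle hTb using hscale
  -- upper bound via Parseval
  have hTx : ∀ x : EuclideanSpace ℝ (Fin n), T x = ∑ j, (b.repr x j * c j) • b j := by
    intro x
    conv_lhs => rw [← b.sum_repr x]
    rw [map_sum]
    refine Finset.sum_congr rfl fun j _ => ?_
    rw [T.map_smul, hTb j, smul_smul]
  have hnormT2 : ∀ x : EuclideanSpace ℝ (Fin n),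
      ‖T x‖ ^ 2 = ∑ j, (b.repr x j * c j) ^ 2 := by
    intro x
    rw [← real_inner_self_eq_norm_sq, hTx x, b.orthonormal.inner_sum]
    simp [sq]
  have hnormx2 : ∀ x : EuclideanSpace ℝ (Fin n), ‖x‖ ^ 2 = ∑ j, (b.repr x j) ^ 2 := by
    intro x
    rw [← real_inner_self_eq_norm_sq]
    conv_lhs => rw [← b.sum_repr x]
    rw [b.orthonormal.inner_sum]
    simp [sq]
  have hupp : ‖T‖ ≤ C := by
    apply ContinuousLinearMap.opNorm_le_bound T hC0
    intro x
    have hsq : ‖T x‖ ^ 2 ≤ (C * ‖x‖) ^ 2 := by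
      rw [hnormT2, mul_pow, hnormx2, Finset.mul_sum]
      apply Finset.sum_le_sum
      intro j _
      have h1 : (b.repr x j * c j) ^ 2 = (c j) ^ 2 * (b.repr x j) ^ 2 := by ring
      rw [h1]
      apply mul_le_mul_of_nonneg_right _ (sq_nonneg _)
      calc (c j) ^ 2 = |c j| ^ 2 := (sq_abs _).symm
        _ ≤ C ^ 2 := pow_le_pow_left₀ (abs_nonneg _) (hcle j) 2
    nlinarith [norm_nonneg (T x), mul_nonneg hC0 (norm_nonneg x)]
  rw [show opNorm M0 = ‖T‖ from rfl]
  exact le_antisymm hupp hlow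
end
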